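/- Let A ∈ ℝ^{m×n}, b ∈ ℝ^m, and x ∈ [0,1]^n with Ax = b. Then there exists a finitely supported probability distribution on [0,1]^n (i.e., finitely many points y^{(1)}, …, y^{(N)} ∈ [0,1]^n with nonnegative weights λ_1, …, λ_N summing to 1) such that: (i) Σ_r λ_r y^{(r)} = x; (ii) A y^{(r)} = b for every r; and (iii) every y^{(r)} has at most m coordinates lying strictly between 0 and 1. -/
import Mathlib


open Finset

/-- Moving from `x` in direction `d` (supported on fractional coordinates) until a
coordinate hits `0` or `1` strictly decreases the number of fractional coordinates. -/
lemma exists_move {n : ℕ} (x d : Fin n → ℝ)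
    (hd0 : d ≠ 0) (hsupp : ∀ i, d i ≠ 0 → 0 < x i ∧ x i < 1)
    (hx : ∀ i, x i ∈ Set.Icc (0:ℝ) 1) :
    ∃ t : ℝ, 0 < t ∧ (∀ i, x i + t * d i ∈ Set.Icc (0:ℝ) 1) ∧
      (univ.filter fun i => 0 < x i + t * d i ∧ x i + t * d i < 1).card <
      (univ.filter fun i => 0 < x i ∧ x i < 1).card := by
  classical
  set S : Finset (Fin n) := univ.filter (fun i => d i ≠ 0) with hS
  have hSne : S.Nonempty := by
    obtain ⟨i, hi⟩ := Function.ne_iff.mp hd0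
    exact ⟨i, by simp only [hS, mem_filter, mem_univ, true_and]; simpa using hi⟩
  set g : Fin n → ℝ := fun i => if 0 < d i then (1 - x i) / d i else x i / (-d i) with hg
  have hgpos : ∀ i ∈ S, 0 < g i := by
    intro i hi
    have hdi : d i ≠ 0 := by simpa [hS] using hi
    obtain ⟨h1, h2⟩ := hsupp i hdi
    by_cases h : 0 < d i
    · simp only [hg, if_pos h]
      exact div_pos (by linarith) h
    · have hneg : 0 < -d i := by
        rcases lt_or_gt_of_ne hdi with hlt | hgt
        · linarith
        · exact absurd hgt h
      simp only [hg, if_neg h]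
      exact div_pos h1 hneg
  set t := S.inf' hSne g with ht
  have htpos : 0 < t := by
    rw [ht, Finset.lt_inf'_iff]
    exact hgpos
  have htle : ∀ i ∈ S, t ≤ g i := fun i hi => Finset.inf'_le g hi
  obtain ⟨i0, hi0S, hi0eq⟩ := Finset.exists_mem_eq_inf' hSne g
  have hbounds : ∀ i, x i + t * d i ∈ Set.Icc (0:ℝ) 1 := by
    intro i
    by_cases hdi : d i = 0
    · simpa [hdi] using hx i
    · have hiS : i ∈ S := by simp [hS, hdi]
      obtain ⟨h1, h2⟩ := hsupp i hdi
      have hle := htle i hiS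
      by_cases h : 0 < d i
      · constructor
        · have : 0 < t * d i := mul_pos htpos h
          linarith
        · have h3 : t * d i ≤ g i * d i :=
            mul_le_mul_of_nonneg_right hle (le_of_lt h)
          rw [hg] at h3
          simp only [if_pos h] at h3
          rw [div_mul_cancel₀ _ (ne_of_gt h)] at h3
          linarith
      · have hneg : 0 < -d i := by
          rcases lt_or_gt_of_ne hdi with hlt | hgt
          · linarith
          · exact absurd hgt h
        constructor
        · have h3 : t * (-d i) ≤ g i * (-d i) :=
            mul_le_mul_of_nonneg_right hle (le_of_lt hneg)
          rw [hg] at h3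
          simp only [if_neg h] at h3
          rw [div_mul_cancel₀ _ (ne_of_gt hneg)] at h3
          nlinarith
        · have : t * d i < 0 := mul_neg_of_pos_of_neg htpos (by linarith)
          linarith
  refine ⟨t, htpos, hbounds, ?_⟩
  have hdi0 : d i0 ≠ 0 := by simpa [hS] using hi0S
  have hi0F : i0 ∈ univ.filter fun i => 0 < x i ∧ x i < 1 := by
    simpa using hsupp i0 hdi0
  have ht0 : t = g i0 := ht.trans hi0eq
  have hi0val : x i0 + t * d i0 = 1 ∨ x i0 + t * d i0 = 0 := by
    by_cases h : 0 < d i0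
    · left
      have : t * d i0 = 1 - x i0 := by
        rw [ht0, hg]
        simp only [if_pos h]
        rw [div_mul_cancel₀ _ (ne_of_gt h)]
      linarith
    · right
      have : t * d i0 = -x i0 := by
        rw [ht0, hg]
        simp only [if_neg h]
        rw [div_mul_eq_mul_div, div_eq_iff (neg_ne_zero.mpr hdi0)]
        ring
      linarith
  have hsub : (univ.filter fun i => 0 < x i + t * d i ∧ x i + t * d i < 1) ⊆
      (univ.filter fun i => 0 < x i ∧ x i < 1).erase i0 := by
    intro i hi
    simp only [mem_filter, mem_univ, true_and] at hi
    rw [mem_erase]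
    constructor
    · rintro rfl
      rcases hi0val with h | h <;> rw [h] at hi <;> linarith [hi.1, hi.2]
    · simp only [mem_filter, mem_univ, true_and]
      by_cases hdi : d i = 0
      · simpa [hdi] using hi
      · exact hsupp i hdi
  calc (univ.filter fun i => 0 < x i + t * d i ∧ x i + t * d i < 1).card
      ≤ ((univ.filter fun i => 0 < x i ∧ x i < 1).erase i0).card :=
        Finset.card_le_card hsub
    _ < (univ.filter fun i => 0 < x i ∧ x i < 1).card :=
        Finset.card_erase_lt_of_mem hi0F

/-- If more than `m` coordinates of `x` are fractional, there is a nonzero direction `d`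
supported on the fractional coordinates with `A d = 0`. -/
lemma exists_kernel_dir {m n : ℕ} (A : Matrix (Fin m) (Fin n) ℝ) (x : Fin n → ℝ)
    (hF : m < (univ.filter fun i => 0 < x i ∧ x i < 1).card) :
    ∃ d : Fin n → ℝ, d ≠ 0 ∧ (∀ i, d i ≠ 0 → 0 < x i ∧ x i < 1) ∧ A.mulVec d = 0 := by
  classical
  set F := univ.filter (fun i => 0 < x i ∧ x i < 1) with hFdef
  set A' : Matrix (Fin m) {i // i ∈ F} ℝ := A.submatrix id (fun j => (j : Fin n)) with hA'
  have hker : LinearMap.ker A'.mulVecLin ≠ ⊥ := by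
    apply LinearMap.ker_ne_bot_of_finrank_lt
    rw [Module.finrank_fintype_fun_eq_card, Module.finrank_fintype_fun_eq_card,
      Fintype.card_fin, Fintype.card_coe]
    exact hF
  obtain ⟨c, hc_mem, hc_ne⟩ := Submodule.ne_bot_iff _ |>.mp hker
  have hc0 : A'.mulVec c = 0 := hc_mem
  set d : Fin n → ℝ := fun i => if h : i ∈ F then c ⟨i, h⟩ else 0 with hd
  refine ⟨d, ?_, ?_, ?_⟩
  · intro hzero
    apply hc_ne
    funext j
    have := congrFun hzero (j : Fin n)
    simpa [hd, j.2] using this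
  · intro i hi
    by_cases h : i ∈ F
    · simpa [hFdef] using h
    · exact absurd (by simp [hd, h]) hi
  · funext j
    have h0 := congrFun hc0 j
    simp only [Matrix.mulVec, dotProduct] at h0 ⊢
    rw [Pi.zero_apply] at h0 ⊢
    have hsum : ∑ i : Fin n, A j i * d i = ∑ i ∈ F, A j i * d i := by
      refine (Finset.sum_subset (Finset.subset_univ F) ?_).symm
      intro i _ hi
      simp [hd, hi]
    rw [hsum, ← Finset.sum_attach F (fun i => A j i * d i)]
    rw [Finset.univ_eq_attach] at h0
    rw [← h0]
    refine Finset.sum_congr rfl fun i _ => ?_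
    simp [hd, i.2, hA']

/-- any point `x` of the polytope `{y ∈ [0,1]^n : Ay = b}` is a convex
combination of points of the polytope each having at most `m` fractional coordinates. -/
theorem rounding_in_expectation
    (m n : ℕ) (A : Matrix (Fin m) (Fin n) ℝ) (b : Fin m → ℝ)
    (x : Fin n → ℝ) (hx : ∀ i, x i ∈ Set.Icc (0 : ℝ) 1) (hAx : A.mulVec x = b) :
    ∃ (N : ℕ) (y : Fin N → Fin n → ℝ) (lam : Fin N → ℝ),
      (∀ r, 0 ≤ lam r) ∧ (∑ r, lam r = 1) ∧
      (∀ r i, y r i ∈ Set.Icc (0 : ℝ) 1) ∧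
      (∀ i, ∑ r, lam r * y r i = x i) ∧
      (∀ r, A.mulVec (y r) = b) ∧
      (∀ r, (Finset.univ.filter (fun i => 0 < y r i ∧ y r i < 1)).card ≤ m) := by
  classical
  suffices H : ∀ k (x : Fin n → ℝ), (∀ i, x i ∈ Set.Icc (0:ℝ) 1) → A.mulVec x = b →
      (univ.filter fun i => 0 < x i ∧ x i < 1).card ≤ k →
      ∃ (N : ℕ) (y : Fin N → Fin n → ℝ) (lam : Fin N → ℝ),
        (∀ r, 0 ≤ lam r) ∧ (∑ r, lam r = 1) ∧
        (∀ r i, y r i ∈ Set.Icc (0 : ℝ) 1) ∧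
        (∀ i, ∑ r, lam r * y r i = x i) ∧
        (∀ r, A.mulVec (y r) = b) ∧
        (∀ r, (Finset.univ.filter (fun i => 0 < y r i ∧ y r i < 1)).card ≤ m) by
    exact H _ x hx hAx le_rfl
  intro k
  induction k with
  | zero =>
    intro x hx hAx hcard
    refine ⟨1, fun _ => x, fun _ => 1, fun _ => zero_le_one, by simp, fun _ => hx,
      fun i => by simp, fun _ => hAx, fun _ => le_trans hcard (Nat.zero_le m)⟩
  | succ k ih =>
    intro x hx hAx hcard
    by_cases hm : (univ.filter fun i => 0 < x i ∧ x i < 1).card ≤ m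
    · exact ⟨1, fun _ => x, fun _ => 1, fun _ => zero_le_one, by simp, fun _ => hx,
        fun i => by simp, fun _ => hAx, fun _ => hm⟩
    · push_neg at hm
      obtain ⟨d, hd0, hsupp, hAd⟩ := exists_kernel_dir A x hm
      obtain ⟨t1, ht1, hb1, hc1⟩ := exists_move x d hd0 hsupp hx
      obtain ⟨t2, ht2, hb2, hc2⟩ := exists_move x (-d) (neg_ne_zero.mpr hd0)
        (fun i hi => hsupp i (by simpa using hi)) hx
      set y1 : Fin n → ℝ := fun i => x i + t1 * d i with hy1def
      set y2 : Fin n → ℝ := fun i => x i + t2 * (-d i) with hy2def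
      have hAy1 : A.mulVec y1 = b := by
        have : y1 = x + t1 • d := by funext i; simp [hy1def, smul_eq_mul]
        rw [this, Matrix.mulVec_add, Matrix.mulVec_smul, hAx, hAd, smul_zero, add_zero]
      have hAy2 : A.mulVec y2 = b := by
        have : y2 = x + t2 • (-d) := by funext i; simp [hy2def, smul_eq_mul]
        rw [this, Matrix.mulVec_add, Matrix.mulVec_smul, Matrix.mulVec_neg, hAd, neg_zero,
          smul_zero, add_zero, hAx]
      have hcard1 : (univ.filter fun i => 0 < y1 i ∧ y1 i < 1).card ≤ k :=
        Nat.lt_succ_iff.mp (lt_of_lt_of_le hc1 hcard)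
      have hcard2 : (univ.filter fun i => 0 < y2 i ∧ y2 i < 1).card ≤ k :=
        Nat.lt_succ_iff.mp (lt_of_lt_of_le hc2 hcard)
      obtain ⟨N1, Y1, L1, hL1nn, hL1sum, hY1mem, hY1avg, hY1A, hY1card⟩ :=
        ih y1 hb1 hAy1 hcard1
      obtain ⟨N2, Y2, L2, hL2nn, hL2sum, hY2mem, hY2avg, hY2A, hY2card⟩ :=
        ih y2 hb2 hAy2 hcard2
      set θ : ℝ := t2 / (t1 + t2) with hθ
      have hden : (0:ℝ) < t1 + t2 := by linarith
      have hθ0 : 0 ≤ θ := div_nonneg (le_of_lt ht2) (le_of_lt hden)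
      have hθ1 : θ ≤ 1 := by
        rw [hθ, div_le_one hden]; linarith
      have hconv : ∀ i, θ * y1 i + (1 - θ) * y2 i = x i := by
        intro i
        simp only [hy1def, hy2def, hθ]
        field_simp
        ring
      refine ⟨N1 + N2, Fin.addCases Y1 Y2,
        Fin.addCases (fun r => θ * L1 r) (fun r => (1 - θ) * L2 r), ?_, ?_, ?_, ?_, ?_, ?_⟩
      · intro r
        refine Fin.addCases (fun r => ?_) (fun r => ?_) r
        · simp only [Fin.addCases_left]
          exact mul_nonneg hθ0 (hL1nn r)
        · simp only [Fin.addCases_right]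
          exact mul_nonneg (by linarith) (hL2nn r)
      · rw [Fin.sum_univ_add]
        simp only [Fin.addCases_left, Fin.addCases_right, ← Finset.mul_sum, hL1sum, hL2sum]
        ring
      · intro r
        refine Fin.addCases (fun r => ?_) (fun r => ?_) r
        · simpa only [Fin.addCases_left] using hY1mem r
        · simpa only [Fin.addCases_right] using hY2mem r
      · intro i
        rw [Fin.sum_univ_add]
        simp only [Fin.addCases_left, Fin.addCases_right, mul_assoc, ← Finset.mul_sum,
          hY1avg i, hY2avg i]
        exact hconv i
      · intro r
        refine Fin.addCases (fun r => ?_) (fun r => ?_) r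
        · simpa only [Fin.addCases_left] using hY1A r
        · simpa only [Fin.addCases_right] using hY2A r
      · intro r
        refine Fin.addCases (fun r => ?_) (fun r => ?_) r
        · simpa only [Fin.addCases_left] using hY1card r
        · simpa only [Fin.addCases_right] using hY2card r
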